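/- Let P ⊂ ℚ² be a symmetric Fano polygon, i.e. the subgroup Aut(P) ≤ GL₂(ℤ) of lattice automorphisms preserving P fixes only the origin. Then P is either centrally symmetric (P = -P) or 3-symmetric (Aut(P) contains an element of order 3). -/
import Mathlib


abbrev Z2 := ℤ × ℤ
abbrev Q2 := ℚ × ℚ

/-- The canonical embedding of lattice points into `ℚ × ℚ`. -/
def toQ (v : Z2) : Q2 := ((v.1 : ℚ), (v.2 : ℚ))

/-- Pairing of a dual lattice vector with a rational point. -/
def dotQ (u : Z2) (x : Q2) : ℚ := (u.1 : ℚ) * x.1 + (u.2 : ℚ) * x.2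

/-- A lattice vector is primitive if its coordinates are coprime. -/
def IsPrimitive (v : Z2) : Prop := Int.gcd v.1 v.2 = 1

/-- Action of an integer matrix on `ℚ × ℚ`. -/
def applyM (G : Matrix (Fin 2) (Fin 2) ℤ) (x : Q2) : Q2 :=
  ((G 0 0 : ℚ) * x.1 + (G 0 1 : ℚ) * x.2, (G 1 0 : ℚ) * x.1 + (G 1 1 : ℚ) * x.2)

/-- Action of an integer matrix on `ℤ × ℤ`. -/
def applyZ (G : Matrix (Fin 2) (Fin 2) ℤ) (v : Z2) : Z2 :=
  (G 0 0 * v.1 + G 0 1 * v.2, G 1 0 * v.1 + G 1 1 * v.2)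

/-- The convex hull in `ℚ²` of a finite set of lattice points. -/
def hull (V : Finset Z2) : Set Q2 := convexHull ℚ (toQ '' (V : Set Z2))

/-- `V` is the vertex set of a Fano polygon: the origin is in the strict interior of the
convex hull, every vertex is primitive, and the points of `V` are exactly the vertices
(extreme points) of the hull. -/
def IsFanoPolygon (V : Finset Z2) : Prop :=
  (0 : Q2) ∈ interior (hull V) ∧
  (∀ v ∈ V, IsPrimitive v) ∧
  toQ '' (V : Set Z2) = Set.extremePoints ℚ (hull V)

/-- `E` is the edge of `P` with primitive inner normal `u` and height `h`:
`u ≥ -h` holds on `P`, with equality exactly on `E`, and `E` has more than one point. -/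
def IsEdge (P E : Set Q2) (u : Z2) (h : ℤ) : Prop :=
  IsPrimitive u ∧ 0 < h ∧
  (∀ x ∈ P, -(h : ℚ) ≤ dotQ u x) ∧
  E = {x ∈ P | dotQ u x = -(h : ℚ)} ∧
  ∃ a b, a ∈ E ∧ b ∈ E ∧ a ≠ b

/-- The lattice length of an edge: the number of lattice points on it minus one. -/
noncomputable def latticeLength (E : Set Q2) : ℕ :=
  Set.ncard {v : Z2 | toQ v ∈ E} - 1

/-- An edge is long if its lattice length is at least its height. -/
def IsLongEdge (P E : Set Q2) (u : Z2) (h : ℤ) : Prop :=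
  IsEdge P E u h ∧ h ≤ (latticeLength E : ℤ)

/-- `P` has a non-empty basket of R-singularities: some edge has lattice length
not a multiple of its height. -/
def HasRsing (P : Set Q2) : Prop :=
  ∃ E u h, IsEdge P E u h ∧ ¬ (h ∣ (latticeLength E : ℤ))

/-- Central symmetry: `P = -P`. -/
def CentSym (P : Set Q2) : Prop := ∀ x, x ∈ P ↔ -x ∈ P

/-- `G` is a lattice automorphism of `P`. -/
def IsAut (G : Matrix (Fin 2) (Fin 2) ℤ) (P : Set Q2) : Prop :=
  IsUnit G.det ∧ applyM G '' P = P

/-- `P` admits a lattice automorphism of order 3. -/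
def ThreeSym (P : Set Q2) : Prop := ∃ G, IsAut G P ∧ G ^ 3 = 1 ∧ G ≠ 1

/-- `P` is symmetric: the fixed-point set of its automorphism group is `{0}`. -/
def SymmetricPolygon (P : Set Q2) : Prop :=
  {x : Q2 | ∀ G, IsAut G P → applyM G x = x} = {0}

abbrev M2 := Matrix (Fin 2) (Fin 2) ℤ


lemma applyM_mul (G H : M2) (x : Q2) : applyM (G * H) x = applyM G (applyM H x) := by
  simp [applyM, Matrix.mul_apply, Fin.sum_univ_two]
  constructor <;> push_cast <;> ring

lemma applyM_one (x : Q2) : applyM 1 x = x := by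
  simp [applyM, Matrix.one_apply]

lemma applyM_neg_one (x : Q2) : applyM (-1) x = -x := by
  simp [applyM, Matrix.one_apply, Prod.ext_iff]

lemma applyZ_mul (G H : M2) (v : Z2) : applyZ (G * H) v = applyZ G (applyZ H v) := by
  simp [applyZ, Matrix.mul_apply, Fin.sum_univ_two]
  constructor <;> ring

lemma applyZ_one (v : Z2) : applyZ 1 v = v := by
  simp [applyZ, Matrix.one_apply]

lemma toQ_applyZ (G : M2) (v : Z2) : toQ (applyZ G v) = applyM G (toQ v) := by
  simp [toQ, applyZ, applyM]

lemma toQ_inj : Function.Injective toQ := by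
  intro a b h
  simp [toQ, Prod.ext_iff] at h ⊢
  exact_mod_cast h

lemma isAut_mul {G H : M2} {P : Set Q2} (hG : IsAut G P) (hH : IsAut H P) :
    IsAut (G * H) P := by
  refine ⟨by rw [Matrix.det_mul]; exact hG.1.mul hH.1, ?_⟩
  have : applyM (G * H) '' P = applyM G '' (applyM H '' P) := by
    rw [← Set.image_comp]; apply Set.image_congr'; intro x; exact applyM_mul G H x
  rw [this, hH.2, hG.2]

lemma isAut_pow {G : M2} {P : Set Q2} (hG : IsAut G P) : ∀ k, 0 < k → IsAut (G ^ k) P := by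
  intro k hk
  induction k with
  | zero => omega
  | succ n ih =>
    rcases Nat.eq_zero_or_pos n with h | h
    · subst h; simpa using hG
    · rw [pow_succ]; exact isAut_mul (ih h) hG

lemma applyM_smul_add (G : M2) (a b : ℚ) (x y : Q2) :
    applyM G (a • x + b • y) = a • applyM G x + b • applyM G y := by
  simp [applyM, Prod.ext_iff, smul_eq_mul]
  constructor <;> ring

lemma ch (G : M2) : G * G = G.trace • G - G.det • (1 : M2) := by
  ext i j
  simp only [Matrix.mul_apply, Fin.sum_univ_two, Matrix.sub_apply, Matrix.smul_apply,
    Matrix.one_apply, smul_eq_mul, Matrix.trace_fin_two, Matrix.det_fin_two]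
  fin_cases i <;> fin_cases j <;> simp <;> ring

def aseq (t d : ℤ) : ℕ → ℤ × ℤ
  | 0 => (0, 1)
  | k + 1 => (t * (aseq t d k).1 + (aseq t d k).2, -d * (aseq t d k).1)

lemma pow_eq_aseq (G : M2) (k : ℕ) :
    G ^ k = (aseq G.trace G.det k).1 • G + (aseq G.trace G.det k).2 • (1 : M2) := by
  induction k with
  | zero => simp [aseq]
  | succ n ih =>
    rw [pow_succ, ih, Matrix.add_mul, Matrix.smul_mul, Matrix.smul_mul, Matrix.one_mul, ch]
    set a := (aseq G.trace G.det n).1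
    set b := (aseq G.trace G.det n).2
    show a • (G.trace • G - G.det • (1:M2)) + b • G
      = (G.trace * a + b) • G + (-G.det * a) • (1:M2)
    rw [smul_sub, smul_smul, smul_smul]
    module

lemma aseq_ge_one (t d : ℤ) (hd : d = 1 ∨ d = -1) (ht : 1 ≤ t) (h3 : 3 ≤ t ∨ d = -1) :
    ∀ k, 1 ≤ (aseq t d (k + 1)).1 ∧ (aseq t d (k + 1)).1 ≤ (aseq t d (k + 2)).1 := by
  intro k
  induction k with
  | zero =>
    simp [aseq]
    nlinarith
  | succ n ih =>
    obtain ⟨h1, h2⟩ := ih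
    constructor
    · linarith
    · show (aseq t d (n+2)).1 ≤ t * (aseq t d (n+2)).1 + (aseq t d (n+2)).2
      have hb : (aseq t d (n+2)).2 = -d * (aseq t d (n+1)).1 := rfl
      rw [hb]
      rcases h3 with h | h
      · rcases hd with h' | h' <;> subst h' <;> nlinarith
      · subst h; nlinarith

lemma entries_of_scalar {G : M2} {a b : ℤ} (ha : a ≠ 0) (h : a • G + b • (1:M2) = 1) :
    G 0 1 = 0 ∧ G 1 0 = 0 ∧ G 0 0 = G 1 1 := by
  have e01 := Matrix.ext_iff.mpr h 0 1
  have e10 := Matrix.ext_iff.mpr h 1 0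
  have e00 := Matrix.ext_iff.mpr h 0 0
  have e11 := Matrix.ext_iff.mpr h 1 1
  simp only [Matrix.add_apply, Matrix.smul_apply, Matrix.one_apply, smul_eq_mul] at e01 e10 e00 e11
  norm_num at e01 e10 e00 e11
  refine ⟨e01.resolve_left ha, e10.resolve_left ha, ?_⟩
  have : a * G 0 0 = a * G 1 1 := by linarith
  exact mul_left_cancel₀ ha this

lemma not_pow_one (G : M2) (hd : G.det = 1 ∨ G.det = -1) (ht : 1 ≤ G.trace)
    (h3 : 3 ≤ G.trace ∨ G.det = -1) (n : ℕ) (hn : 0 < n) : G ^ n ≠ 1 := by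
  intro h
  obtain ⟨m, rfl⟩ : ∃ m, n = m + 1 := ⟨n - 1, by omega⟩
  have ha := (aseq_ge_one _ _ hd ht h3 m).1
  rw [pow_eq_aseq] at h
  obtain ⟨h01, h10, hdiag⟩ := entries_of_scalar (by omega) h
  have hdet : G.det = G 0 0 * G 1 1 := by rw [Matrix.det_fin_two, h01]; ring
  have htr : G.trace = G 0 0 + G 1 1 := Matrix.trace_fin_two G
  rcases h3 with h3 | h3
  · rcases hd with hd | hd <;> nlinarith
  · nlinarith

lemma aseq_two_one (k : ℕ) : aseq 2 1 k = ((k : ℤ), 1 - (k : ℤ)) := by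
  induction k with
  | zero => simp [aseq]
  | succ n ih => simp [aseq, ih]; push_cast; ring

lemma eq_one_of_t2 (G : M2) (ht : G.trace = 2) (hd : G.det = 1) (n : ℕ) (hn : 0 < n)
    (h : G ^ n = 1) : G = 1 := by
  rw [pow_eq_aseq, ht, hd, aseq_two_one] at h
  have hn' : (n : ℤ) ≠ 0 := by exact_mod_cast Nat.pos_iff_ne_zero.mp hn
  ext i j
  have e := Matrix.ext_iff.mpr h i j
  simp only [Matrix.add_apply, Matrix.smul_apply, smul_eq_mul] at e
  by_cases hij : i = j
  · subst hij
    rw [Matrix.one_apply_eq] at e ⊢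
    have : (n:ℤ) * G i i = (n:ℤ) * 1 := by linarith
    exact mul_left_cancel₀ hn' this
  · rw [Matrix.one_apply_ne hij] at e ⊢
    have : (n:ℤ) * G i j = 0 := by linarith
    rcases mul_eq_zero.mp this with h' | h'
    · exact absurd h' hn'
    · exact h'

lemma classify (G : M2) (hd : G.det = 1 ∨ G.det = -1) (n : ℕ) (hn : 0 < n)
    (h : G ^ n = 1) :
    G = 1 ∨ (G ^ 3 = 1 ∧ G ≠ 1) ∨ (G ^ 2 = 1 ∧ G.det = -1) ∨ ∃ k, 0 < k ∧ G ^ k = -1 := by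
  have hch := ch G
  have hGn2 : (-G) ^ (2 * n) = 1 := by
    rw [Even.neg_pow (even_two_mul n), mul_comm, pow_mul, h, one_pow]
  have hdneg : (-G).det = G.det := by rw [Matrix.det_neg]; simp
  have htrneg : (-G).trace = -G.trace := by simp
  have hb1 : ¬ (3 ≤ G.trace) := fun hc =>
    not_pow_one G hd (by omega) (Or.inl hc) n hn h
  have hb2 : ¬ (G.trace ≤ -3) := fun hc =>
    not_pow_one (-G) (by rw [hdneg]; exact hd) (by rw [htrneg]; omega)
      (Or.inl (by rw [htrneg]; omega)) (2*n) (by omega) hGn2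
  have hb3 : ¬ (1 ≤ G.trace ∧ G.det = -1) := fun ⟨hc1, hc2⟩ =>
    not_pow_one G hd hc1 (Or.inr hc2) n hn h
  have hb4 : ¬ (G.trace ≤ -1 ∧ G.det = -1) := fun ⟨hc1, hc2⟩ =>
    not_pow_one (-G) (by rw [hdneg]; exact hd) (by rw [htrneg]; omega)
      (Or.inr (by rw [hdneg]; exact hc2)) (2*n) (by omega) hGn2
  have hsq : G ^ 2 = G.trace • G - G.det • (1 : M2) := by rw [pow_two]; exact hch
  rcases hd with hd1 | hd1
  · -- det = 1
    have ht : G.trace = -2 ∨ G.trace = -1 ∨ G.trace = 0 ∨ G.trace = 1 ∨ G.trace = 2 := by omega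
    rcases ht with ht | ht | ht | ht | ht
    · -- G = -1
      have hng : -G = 1 := eq_one_of_t2 (-G) (by rw [htrneg, ht]; ring)
        (by rw [hdneg, hd1]) (2*n) (by omega) hGn2
      right; right; right
      exact ⟨1, one_pos, by rw [pow_one]; exact neg_eq_iff_eq_neg.mp hng⟩
    · -- order 3
      right; left
      constructor
      · have h2 : G ^ 2 = -G - 1 := by rw [hsq, ht, hd1]; module
        rw [pow_succ, h2, Matrix.sub_mul, Matrix.one_mul, Matrix.neg_mul, ← pow_two, h2]
        abel
      · intro hG1; rw [hG1] at ht; simp [Matrix.trace_one] at ht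
    · -- trace 0: G^2 = -1
      right; right; right
      exact ⟨2, two_pos, by rw [hsq, ht, hd1]; module⟩
    · -- trace 1: G^3 = -1
      right; right; right
      refine ⟨3, three_pos, ?_⟩
      have h2 : G ^ 2 = G - 1 := by rw [hsq, ht, hd1]; module
      rw [pow_succ, h2, Matrix.sub_mul, Matrix.one_mul, ← pow_two, h2]
      abel
    · left; exact eq_one_of_t2 G ht hd1 n hn h
  · -- det = -1 : trace must be 0
    have ht : G.trace = 0 := by
      by_contra hne
      rcases lt_or_gt_of_ne hne with hlt | hgt
      · exact hb4 ⟨by omega, hd1⟩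
      · exact hb3 ⟨by omega, hd1⟩
    right; right; left
    exact ⟨by rw [hsq, ht, hd1]; module, hd1⟩

lemma exists_inv {G : M2} (h : IsUnit G.det) : ∃ H : M2, G * H = 1 ∧ H * G = 1 := by
  have hu : IsUnit G := (Matrix.isUnit_iff_isUnit_det G).mpr h
  obtain ⟨u, rfl⟩ := hu
  exact ⟨u.inv, u.val_inv, u.inv_val⟩

lemma aut_extreme {P : Set Q2} {G : M2} (hG : IsAut G P) {x : Q2}
    (hx : x ∈ Set.extremePoints ℚ P) : applyM G x ∈ Set.extremePoints ℚ P := by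
  obtain ⟨hdet, himg⟩ := hG
  obtain ⟨H, hGH, hHG⟩ := exists_inv hdet
  have hHG' : ∀ y, applyM H (applyM G y) = y := fun y => by
    rw [← applyM_mul, hHG, applyM_one]
  have hGH' : ∀ y, applyM G (applyM H y) = y := fun y => by
    rw [← applyM_mul, hGH, applyM_one]
  have hHimg : applyM H '' P = P := by
    conv_lhs => rw [← himg]
    rw [← Set.image_comp]
    have : (applyM H ∘ applyM G) = id := funext fun y => hHG' y
    rw [this, Set.image_id]
  rw [mem_extremePoints] at hx ⊢
  refine ⟨by rw [← himg]; exact Set.mem_image_of_mem _ hx.1, ?_⟩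
  intro y hy z hz hseg
  obtain ⟨a, b, ha, hb, hab, heq⟩ := hseg
  have hyP : applyM H y ∈ P := by rw [← hHimg]; exact Set.mem_image_of_mem _ hy
  have hzP : applyM H z ∈ P := by rw [← hHimg]; exact Set.mem_image_of_mem _ hz
  have hseg' : a • applyM H y + b • applyM H z = x := by
    rw [← applyM_smul_add H a b y z, heq, hHG']
  have hx2 := hx.2 _ hyP _ hzP ⟨a, b, ha, hb, hab, hseg'⟩
  exact ⟨by rw [← hGH' y, hx2.1], by rw [← hGH' z, hx2.2]⟩

lemma applyZ_inj {G : M2} (h : IsUnit G.det) : Function.Injective (applyZ G) := by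
  intro a b hab
  obtain ⟨H, _, hHG⟩ := exists_inv h
  have h2 := congrArg (applyZ H) hab
  rw [← applyZ_mul, ← applyZ_mul, hHG, applyZ_one, applyZ_one] at h2
  exact h2

lemma exists_indep (V : Finset Z2) (h0 : (0:Q2) ∈ interior (hull V))
    (hprim : ∀ v ∈ V, IsPrimitive v) :
    ∃ v ∈ V, ∃ w ∈ V, v.1 * w.2 - v.2 * w.1 ≠ 0 := by
  rcases V.eq_empty_or_nonempty with rfl | ⟨v₀, hv₀⟩
  · exfalso
    simp [hull] at h0
  by_contra hcon
  push_neg at hcon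
  have hv₀0 : v₀ ≠ 0 := by
    intro h
    have := hprim v₀ hv₀
    rw [h] at this
    simp [IsPrimitive] at this
  set u : Z2 := (v₀.2, -v₀.1) with hu
  have hudot : ∀ w ∈ V, dotQ u (toQ w) = 0 := by
    intro w hw
    have := hcon v₀ hv₀ w hw
    simp only [dotQ, toQ, hu]
    push_cast
    have : (v₀.1 : ℚ) * w.2 - v₀.2 * w.1 = 0 := by exact_mod_cast this
    linarith
  have hK : Convex ℚ {x : Q2 | dotQ u x = 0} := by
    intro x hx y hy a b ha hb hab
    simp only [Set.mem_setOf_eq, dotQ] at hx hy ⊢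
    simp only [Prod.fst_add, Prod.snd_add, Prod.smul_fst, Prod.smul_snd, smul_eq_mul]
    nlinarith [hx, hy]
  have hsub : hull V ⊆ {x : Q2 | dotQ u x = 0} := by
    apply convexHull_min _ hK
    rintro x ⟨w, hw, rfl⟩
    exact hudot w hw
  have hnhds : {x : Q2 | dotQ u x = 0} ∈ nhds (0 : Q2) :=
    mem_interior_iff_mem_nhds.mp (interior_mono hsub h0)
  set φ : ℚ → Q2 := fun t => (t * (u.1 : ℚ), t * (u.2 : ℚ)) with hφ
  have hcont : Continuous φ := by fun_prop
  have hφ0 : φ 0 = 0 := by simp [hφ]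
  have hpre : φ ⁻¹' {x : Q2 | dotQ u x = 0} ∈ nhds (0 : ℚ) := by
    apply hcont.continuousAt.preimage_mem_nhds
    rw [hφ0]; exact hnhds
  obtain ⟨ε, hε, hball⟩ := Metric.mem_nhds_iff.mp hpre
  obtain ⟨q, hq1, hq2⟩ := exists_rat_btwn (show (0:ℝ) < ε from hε)
  have hq0 : (0:ℚ) < q := by exact_mod_cast hq1
  have hmem : q ∈ Metric.ball (0:ℚ) ε := by
    rw [Metric.mem_ball, Rat.dist_eq]
    push_cast
    rw [sub_zero, abs_of_pos hq1]
    exact hq2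
  have := hball hmem
  simp only [Set.mem_preimage, Set.mem_setOf_eq, dotQ, hφ] at this
  have husq : (0:ℚ) < (u.1:ℚ)^2 + (u.2:ℚ)^2 := by
    have : u.1 ≠ 0 ∨ u.2 ≠ 0 := by
      by_contra hc
      push_neg at hc
      apply hv₀0
      have h1 := hc.1; have h2 := hc.2
      simp [hu] at h1 h2
      exact Prod.ext h2 h1
    rcases this with h | h
    · have : (u.1:ℚ) ≠ 0 := Int.cast_ne_zero.mpr h
      positivity
    · have : (u.2:ℚ) ≠ 0 := Int.cast_ne_zero.mpr h
      positivity
  nlinarith [this, husq, hq0]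

lemma eq_one_of_fix (M : M2) (v w : Z2) (hv : applyZ M v = v) (hw : applyZ M w = w)
    (hd : v.1 * w.2 - v.2 * w.1 ≠ 0) : M = 1 := by
  have e1 : M 0 0 * v.1 + M 0 1 * v.2 = v.1 := congrArg Prod.fst hv
  have e2 : M 1 0 * v.1 + M 1 1 * v.2 = v.2 := congrArg Prod.snd hv
  have e3 : M 0 0 * w.1 + M 0 1 * w.2 = w.1 := congrArg Prod.fst hw
  have e4 : M 1 0 * w.1 + M 1 1 * w.2 = w.2 := congrArg Prod.snd hw
  have h00 : (M 0 0 - 1) * (v.1 * w.2 - v.2 * w.1) = 0 := by linear_combination w.2 * e1 - v.2 * e3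
  have h01 : M 0 1 * (v.1 * w.2 - v.2 * w.1) = 0 := by linear_combination v.1 * e3 - w.1 * e1
  have h10 : M 1 0 * (v.1 * w.2 - v.2 * w.1) = 0 := by linear_combination w.2 * e2 - v.2 * e4
  have h11 : (M 1 1 - 1) * (v.1 * w.2 - v.2 * w.1) = 0 := by linear_combination v.1 * e4 - w.1 * e2
  have f00 := (mul_eq_zero.mp h00).resolve_right hd
  have f01 := (mul_eq_zero.mp h01).resolve_right hd
  have f10 := (mul_eq_zero.mp h10).resolve_right hd
  have f11 := (mul_eq_zero.mp h11).resolve_right hd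
  ext i j
  fin_cases i <;> fin_cases j <;> simp [Matrix.one_apply] <;> omega

lemma aut_fin_order (V : Finset Z2)
    (hext : toQ '' (V : Set Z2) = Set.extremePoints ℚ (hull V))
    (G : M2) (hG : IsAut G (hull V))
    (v w : Z2) (hv : v ∈ V) (hw : w ∈ V) (hvw : v.1 * w.2 - v.2 * w.1 ≠ 0) :
    ∃ n, 0 < n ∧ G ^ n = 1 := by
  classical
  have hmaps : ∀ x ∈ V, applyZ G x ∈ V := by
    intro x hx
    have h1 : toQ x ∈ Set.extremePoints ℚ (hull V) := by
      rw [← hext]; exact Set.mem_image_of_mem _ hx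
    have h2 := aut_extreme hG h1
    rw [← hext, ← toQ_applyZ] at h2
    obtain ⟨y, hy, hyx⟩ := h2
    rw [← toQ_inj hyx]; exact hy
  have hinj := applyZ_inj hG.1
  set f : {x // x ∈ V} → {x // x ∈ V} := fun x => ⟨applyZ G x.1, hmaps x.1 x.2⟩ with hf
  have hfinj : Function.Injective f := by
    intro a b hab
    exact Subtype.ext (hinj (congrArg Subtype.val hab))
  have hbij := Finite.injective_iff_bijective.mp hfinj
  set e : Equiv.Perm {x // x ∈ V} := Equiv.ofBijective f hbij with he
  have key : ∀ (k : ℕ) (x : {x // x ∈ V}), ((e ^ k) x).1 = applyZ (G ^ k) x.1 := by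
    intro k
    induction k with
    | zero => intro x; rw [pow_zero, pow_zero, applyZ_one]; rfl
    | succ m ih =>
      intro x
      rw [pow_succ, pow_succ, applyZ_mul]
      have h1 : (e ^ m * e) x = (e ^ m) (e x) := rfl
      rw [h1, ih (e x)]
      rfl
  refine ⟨orderOf e, orderOf_pos e, ?_⟩
  have hfix : ∀ x (hx : x ∈ V), applyZ (G ^ orderOf e) x = x := by
    intro x hx
    have h2 := key (orderOf e) ⟨x, hx⟩
    rw [pow_orderOf_eq_one e] at h2
    exact h2.symm
  exact eq_one_of_fix _ v w (hfix v hv) (hfix w hw) hvw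

lemma refl_fixed (r : M2) (h2 : r ^ 2 = 1) (hd : r.det = -1) :
    ∃ x : Q2, x ≠ 0 ∧ applyM r x = x := by
  have hch := ch r
  rw [← pow_two, h2, hd] at hch
  -- 1 = t • r + 1, so t • r = 0
  have htr0 : r.trace • r = 0 := by
    have h' : r.trace • r - (-1 : ℤ) • (1:M2) = 1 := hch.symm
    rw [sub_eq_iff_eq_add] at h'
    rw [h']; simp
  have htr : r.trace = 0 := by
    by_contra hne
    have hall : ∀ i j, r i j = 0 := by
      intro i j
      have := Matrix.ext_iff.mpr htr0 i j
      simp only [Matrix.smul_apply, smul_eq_mul, Matrix.zero_apply] at this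
      exact (mul_eq_zero.mp this).resolve_left hne
    have : r.det = 0 := by
      rw [Matrix.det_fin_two, hall, hall, hall]; ring
    omega
  have htr2 : r 1 1 = -(r 0 0) := by
    have := Matrix.trace_fin_two r
    omega
  have hdet2 : r 0 0 ^ 2 + r 0 1 * r 1 0 = 1 := by
    have := Matrix.det_fin_two r
    rw [hd, htr2] at this
    nlinarith [this]
  by_cases hc : r 0 0 = -1 ∧ r 1 0 = 0
  · refine ⟨((r 0 1 : ℚ), (r 1 1 : ℚ) + 1), ?_, ?_⟩
    · intro h
      have h2' : (r 1 1 : ℚ) + 1 = 0 := congrArg Prod.snd h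
      have h3 : r 1 1 = 1 := by rw [htr2, hc.1]; ring
      rw [h3] at h2'
      norm_num at h2'
    · have key : (r 0 0 : ℚ)^2 + r 0 1 * r 1 0 = 1 := by exact_mod_cast hdet2
      have ht : (r 1 1 : ℚ) = -(r 0 0 : ℚ) := by exact_mod_cast htr2
      rw [applyM, Prod.ext_iff]
      constructor
      · simp only
        rw [ht]; ring
      · simp only
        rw [ht]; nlinarith [key]
  · refine ⟨((r 0 0 : ℚ) + 1, (r 1 0 : ℚ)), ?_, ?_⟩
    · intro h
      have h1 : (r 0 0 : ℚ) + 1 = 0 := congrArg Prod.fst h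
      have h2' : (r 1 0 : ℚ) = 0 := congrArg Prod.snd h
      apply hc
      constructor
      · have : (r 0 0 : ℚ) = -1 := by linarith
        exact_mod_cast this
      · exact_mod_cast h2'
    · have key : (r 0 0 : ℚ)^2 + r 0 1 * r 1 0 = 1 := by exact_mod_cast hdet2
      have ht : (r 1 1 : ℚ) = -(r 0 0 : ℚ) := by exact_mod_cast htr2
      rw [applyM, Prod.ext_iff]
      constructor
      · simp only
        nlinarith [key]
      · simp only
        rw [ht]; ring


/-- A symmetric Fano polygon is centrally symmetric or 3-symmetric. -/
theorem stmt_6 (V : Finset Z2) (hF : IsFanoPolygon V)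
    (hS : SymmetricPolygon (hull V)) :
    CentSym (hull V) ∨ ThreeSym (hull V) := by
  obtain ⟨h0, hprim, hext⟩ := hF
  by_cases h3 : ThreeSym (hull V)
  · exact Or.inr h3
  left
  obtain ⟨v, hv, w, hw, hvw⟩ := exists_indep V h0 hprim
  have hclass : ∀ G : M2, IsAut G (hull V) →
      G = 1 ∨ (G ^ 2 = 1 ∧ G.det = -1) ∨ IsAut (-1) (hull V) := by
    intro G hG
    obtain ⟨n, hn, hGn⟩ := aut_fin_order V hext G hG v w hv hw hvw
    have hd := Int.isUnit_iff.mp hG.1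
    rcases classify G hd n hn hGn with h | ⟨h31, h32⟩ | h | ⟨k, hk, hGk⟩
    · exact Or.inl h
    · exact absurd ⟨G, hG, h31, h32⟩ h3
    · exact Or.inr (Or.inl h)
    · exact Or.inr (Or.inr (hGk ▸ isAut_pow hG k hk))
  by_cases hneg : IsAut (-1) (hull V)
  · intro x
    have himg := hneg.2
    constructor
    · intro hx
      have hmem : applyM (-1) x ∈ applyM (-1) '' hull V := Set.mem_image_of_mem _ hx
      rw [himg] at hmem
      rwa [applyM_neg_one] at hmem
    · intro hx
      have hmem : applyM (-1) (-x) ∈ applyM (-1) '' hull V := Set.mem_image_of_mem _ hx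
      rw [himg] at hmem
      rwa [applyM_neg_one, neg_neg] at hmem
  · exfalso
    have hall : ∀ G : M2, IsAut G (hull V) → G = 1 ∨ (G ^ 2 = 1 ∧ G.det = -1) := by
      intro G hG
      rcases hclass G hG with h | h | h
      exacts [Or.inl h, Or.inr h, absurd h hneg]
    rw [SymmetricPolygon] at hS
    by_cases hr : ∃ r : M2, IsAut r (hull V) ∧ r ≠ 1
    · obtain ⟨r, hrA, hr1⟩ := hr
      obtain ⟨hr2, hrd⟩ := (hall r hrA).resolve_left hr1
      obtain ⟨x, hx0, hxfix⟩ := refl_fixed r hr2 hrd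
      have hxmem : x ∈ {y : Q2 | ∀ G, IsAut G (hull V) → applyM G y = y} := by
        intro G hG
        rcases hall G hG with h | ⟨hG2, hGd⟩
        · rw [h, applyM_one]
        · have hrG := hall (r * G) (isAut_mul hrA hG)
          rcases hrG with h1 | ⟨_, hd2⟩
          · have hGr : G = r := by
              have h4 : r * (r * G) = r * 1 := by rw [h1]
              rw [← mul_assoc, ← pow_two, hr2, one_mul, mul_one] at h4
              exact h4
            rw [hGr]; exact hxfix
          · exfalso
            rw [Matrix.det_mul, hrd, hGd] at hd2
            norm_num at hd2
      rw [hS] at hxmem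
      exact hx0 hxmem
    · push_neg at hr
      have hxmem : ((1:ℚ), (0:ℚ)) ∈ {y : Q2 | ∀ G, IsAut G (hull V) → applyM G y = y} := by
        intro G hG
        rw [hr G hG, applyM_one]
      rw [hS] at hxmem
      have : ((1:ℚ), (0:ℚ)) = (0 : Q2) := hxmem
      simp [Prod.ext_iff] at this
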